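/- Let m, n ≥ 1, let μ_1, μ_2 be locally valid MV assignments of the square grid crease pattern G_{m,n}, and let S be a set of faces converting μ_1 into μ_2. Then: (a) a finite sequence (F_1, …, F_L) of faces, applied as successive face flips starting from μ_1, yields μ_2 if and only if the set of faces occurring an odd number of times in the sequence converts μ_1 into μ_2; and (b) the minimum length of such a sequence equals min(|S|, mn − |S|). -/

import Mathlib

/-- A crease edge of the `m × n` square grid crease pattern: a vertical crease
`V i j` between faces `(i,j)` and `(i+1,j)`, or a horizontal crease `H i j`
between faces `(i,j)` and `(i,j+1)`. -/
inductive Crease (m n : ℕ) : Type where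
  | V : (i j : ℕ) → i + 1 < m → j < n → Crease m n
  | H : (i j : ℕ) → i < m → j + 1 < n → Crease m n

/-- The face `F` borders the crease `e`. -/
def Borders {m n : ℕ} (F : ℕ × ℕ) : Crease m n → Prop
  | .V i j _ _ => F = (i, j) ∨ F = (i + 1, j)
  | .H i j _ _ => F = (i, j) ∨ F = (i, j + 1)

instance {m n : ℕ} (F : ℕ × ℕ) (e : Crease m n) : Decidable (Borders F e) :=
  match e with
  | .V i j _ _ => inferInstanceAs (Decidable (F = (i, j) ∨ F = (i + 1, j)))
  | .H i j _ _ => inferInstanceAs (Decidable (F = (i, j) ∨ F = (i, j + 1)))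

/-- A mountain-valley assignment takes values in `{-1, 1}`. -/
def IsMV {m n : ℕ} (μ : Crease m n → ℤ) : Prop :=
  ∀ e, μ e = 1 ∨ μ e = -1

/-- Local validity: at every interior vertex `(a+1, b+1)` the sum of `μ` over the four
incident crease edges is `2` or `-2`. -/
def LocallyValid {m n : ℕ} (μ : Crease m n → ℤ) : Prop :=
  ∀ a b : ℕ, ∀ ha : a + 1 < m, ∀ hb : b + 1 < n,
    μ (.V a b ha (by omega)) + μ (.V a (b + 1) ha hb) +
      μ (.H a b (by omega) hb) + μ (.H (a + 1) b ha hb) = 2 ∨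
    μ (.V a b ha (by omega)) + μ (.V a (b + 1) ha hb) +
      μ (.H a b (by omega) hb) + μ (.H (a + 1) b ha hb) = -2

/-- The face faceFlip of `μ` at the face `F`. -/
def faceFlip {m n : ℕ} (μ : Crease m n → ℤ) (F : ℕ × ℕ) (e : Crease m n) : ℤ :=
  if Borders F e then -μ e else μ e

/-- The faces of the `m × n` square grid. -/
def Faces (m n : ℕ) : Finset (ℕ × ℕ) := Finset.range m ×ˢ Finset.range n

/-- A set `S` of faces converts `μ₁` into `μ₂` if for every crease edge `e`,
`μ₂ e = μ₁ e * (-1) ^ |{F ∈ S : F borders e}|`. -/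
def Converts {m n : ℕ} (μ₁ μ₂ : Crease m n → ℤ) (S : Finset (ℕ × ℕ)) : Prop :=
  ∀ e : Crease m n, μ₂ e = μ₁ e * (-1) ^ (S.filter (fun F => Borders F e)).card

/-- Applying the face flips of a list of faces in succession, starting from `μ`. -/
def flipSeq {m n : ℕ} (μ : Crease m n → ℤ) (L : List (ℕ × ℕ)) : Crease m n → ℤ :=
  L.foldl (fun ν F => faceFlip ν F) μ

section helper
variable {m n : ℕ}

lemma beq_inst_eq : (instBEqProd : BEq (ℕ × ℕ)) =
    @instBEqOfDecidableEq (ℕ × ℕ) (inferInstance : DecidableEq (ℕ × ℕ)) := by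
  refine beq_ext _ _ fun x y => ?_
  show (x == y) = decide (x = y)
  simp [beq_eq_decide]

lemma neg_one_pow_ite (c : ℕ) :
    ((-1 : ℤ)) ^ c = (-1) ^ (if Odd c then 1 else 0) := by
  by_cases hp : Odd c
  · rw [if_pos hp]
    exact hp.neg_one_pow.trans (pow_one _).symm
  · rw [if_neg hp]
    exact ((Nat.not_odd_iff_even.1 hp).neg_one_pow).trans (pow_zero _).symm

lemma flipSeq_eval (L : List (ℕ × ℕ)) (μ : Crease m n → ℤ) (e : Crease m n) :
    flipSeq μ L e = μ e * (-1) ^ (L.countP (fun F => decide (Borders F e))) := by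
  induction L generalizing μ with
  | nil => simp [flipSeq]
  | cons F L ih =>
    have h : flipSeq μ (F :: L) = flipSeq (faceFlip μ F) L := rfl
    rw [h, ih, List.countP_cons]
    by_cases hb : Borders F e <;> simp [faceFlip, hb, pow_succ] <;> ring

lemma neg_one_pow_count (L : List (ℕ × ℕ)) (e : Crease m n) :
    ((-1 : ℤ)) ^ (L.countP (fun F => decide (Borders F e))) =
      (-1) ^ ((L.toFinset.filter (fun F => Odd (L.count F))).filter
        (fun F => Borders F e)).card := by
  classical
  rw [beq_inst_eq]
  rw [← Finset.sum_filter_count_eq_countP (fun F => Borders F e) L]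
  rw [Finset.filter_comm, Finset.card_filter]
  rw [← Finset.prod_pow_eq_pow_sum, ← Finset.prod_pow_eq_pow_sum]
  exact Finset.prod_congr rfl (fun F _ => neg_one_pow_ite _)

lemma filter_pair_card (S : Finset (ℕ × ℕ)) (A B : ℕ × ℕ) (hAB : A ≠ B) :
    (S.filter (fun F => F = A ∨ F = B)).card =
      (if A ∈ S then 1 else 0) + (if B ∈ S then 1 else 0) := by
  classical
  rw [Finset.filter_or, Finset.filter_eq', Finset.filter_eq',
    Finset.card_union_of_disjoint]
  · by_cases hA : A ∈ S <;> by_cases hB : B ∈ S <;> simp [hA, hB]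
  · by_cases hA : A ∈ S <;> by_cases hB : B ∈ S <;>
      simp [hA, hB, Finset.disjoint_singleton, hAB, Ne.symm hAB]

lemma mem_faces (F : ℕ × ℕ) : F ∈ Faces m n ↔ F.1 < m ∧ F.2 < n := by
  simp [Faces]

lemma card_faces : (Faces m n).card = m * n := by
  simp [Faces]

lemma card_filter_faces (e : Crease m n) :
    ((Faces m n).filter (fun F => Borders F e)).card = 2 := by
  cases e with
  | V i j h1 h2 =>
    have h : ((Faces m n).filter (fun F => Borders F (Crease.V i j h1 h2))).card =
        ((Faces m n).filter (fun F => F = (i, j) ∨ F = (i + 1, j))).card := rfl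
    rw [h, filter_pair_card _ _ _ (by simp)]
    have hA : ((i, j) : ℕ × ℕ) ∈ Faces m n := (mem_faces _).2 ⟨by omega, by omega⟩
    have hB : ((i + 1, j) : ℕ × ℕ) ∈ Faces m n := (mem_faces _).2 ⟨by omega, by omega⟩
    simp [hA, hB]
  | H i j h1 h2 =>
    have h : ((Faces m n).filter (fun F => Borders F (Crease.H i j h1 h2))).card =
        ((Faces m n).filter (fun F => F = (i, j) ∨ F = (i, j + 1))).card := rfl
    rw [h, filter_pair_card _ _ _ (by simp)]
    have hA : ((i, j) : ℕ × ℕ) ∈ Faces m n := (mem_faces _).2 ⟨by omega, by omega⟩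
    have hB : ((i, j + 1) : ℕ × ℕ) ∈ Faces m n := (mem_faces _).2 ⟨by omega, by omega⟩
    simp [hA, hB]

lemma converts_compl {μ₁ μ₂ : Crease m n → ℤ} {S : Finset (ℕ × ℕ)}
    (hS : S ⊆ Faces m n) (h : Converts μ₁ μ₂ S) :
    Converts μ₁ μ₂ (Faces m n \ S) := by
  intro e
  rw [h e]
  congr 1
  have hsub : S.filter (fun F => Borders F e) ⊆
      (Faces m n).filter (fun F => Borders F e) := Finset.filter_subset_filter _ hS
  have heq : (Faces m n \ S).filter (fun F => Borders F e) =
      (Faces m n).filter (fun F => Borders F e) \ S.filter (fun F => Borders F e) := by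
    ext F
    simp only [Finset.mem_filter, Finset.mem_sdiff]
    tauto
  have hle : (S.filter (fun F => Borders F e)).card ≤ 2 := by
    rw [← card_filter_faces e]; exact Finset.card_le_card hsub
  rw [heq, Finset.card_sdiff_of_subset hsub, card_filter_faces e]
  interval_cases hc : (S.filter (fun F => Borders F e)).card <;> norm_num

lemma odd_iff_of_pow_eq {a b : ℕ} (h : ((-1 : ℤ)) ^ a = (-1) ^ b) :
    (Odd a ↔ Odd b) := by
  constructor <;> intro hx <;> by_contra hy
  · rw [hx.neg_one_pow, (Nat.not_odd_iff_even.1 hy).neg_one_pow] at h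
    norm_num at h
  · rw [hx.neg_one_pow, (Nat.not_odd_iff_even.1 hy).neg_one_pow] at h
    norm_num at h

/-- Uniqueness up to complement of a converting set. -/
lemma converts_unique {μ₁ μ₂ : Crease m n → ℤ} (hm : 1 ≤ m) (hn : 1 ≤ n)
    (hmv₁ : IsMV μ₁) {S T : Finset (ℕ × ℕ)}
    (hS : S ⊆ Faces m n) (hT : T ⊆ Faces m n)
    (h1 : Converts μ₁ μ₂ S) (h2 : Converts μ₁ μ₂ T) :
    T = S ∨ T = Faces m n \ S := by
  classical
  set P : ℕ × ℕ → Prop := fun F => (F ∈ S ↔ F ∈ T) with hP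
  have key : ∀ e : Crease m n,
      Odd (S.filter (fun F => Borders F e)).card ↔
      Odd (T.filter (fun F => Borders F e)).card := by
    intro e
    apply odd_iff_of_pow_eq
    have hμ : μ₁ e ≠ 0 := by rcases hmv₁ e with h | h <;> omega
    have := (h1 e).symm.trans (h2 e)
    exact mul_left_cancel₀ hμ this
  have step : ∀ (A B : ℕ × ℕ), A ≠ B →
      ((S.filter (fun F => F = A ∨ F = B)).card =
        (if A ∈ S then 1 else 0) + (if B ∈ S then 1 else 0)) := fun A B hAB =>
    filter_pair_card S A B hAB
  have pairP : ∀ (A B : ℕ × ℕ), A ≠ B →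
      (Odd (S.filter (fun F => F = A ∨ F = B)).card ↔
       Odd (T.filter (fun F => F = A ∨ F = B)).card) → (P A ↔ P B) := by
    intro A B hAB hodd
    rw [filter_pair_card S A B hAB, filter_pair_card T A B hAB] at hodd
    simp only [hP]
    by_cases h1 : A ∈ S <;> by_cases h2 : B ∈ S <;> by_cases h3 : A ∈ T <;>
      by_cases h4 : B ∈ T <;>
      simp [h1, h2, h3, h4, Nat.odd_iff] at hodd ⊢ <;> tauto
  have hv : ∀ i j, ∀ (h1 : i + 1 < m) (h2 : j < n), (P (i, j) ↔ P (i + 1, j)) := by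
    intro i j hij hj
    refine pairP _ _ (by simp) ?_
    exact key (Crease.V i j hij hj)
  have hh : ∀ i j, ∀ (h1 : i < m) (h2 : j + 1 < n), (P (i, j) ↔ P (i, j + 1)) := by
    intro i j hi hij
    refine pairP _ _ (by simp) ?_
    exact key (Crease.H i j hi hij)
  have h0 : ∀ j, j < n → (P (0, j) ↔ P (0, 0)) := by
    intro j
    induction j with
    | zero => simp
    | succ j ih =>
      intro hj
      rw [← hh 0 j (by omega) hj]
      exact ih (by omega)
  have hconn : ∀ i j, i < m → j < n → (P (i, j) ↔ P (0, 0)) := by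
    intro i
    induction i with
    | zero => intro j _ hj; exact h0 j hj
    | succ i ih =>
      intro j hi hj
      rw [← hv i j hi hj]
      exact ih j (by omega) hj
  by_cases hP0 : P (0, 0)
  · left
    ext F
    by_cases hF : F ∈ Faces m n
    · obtain ⟨h1, h2⟩ := (mem_faces F).1 hF
      have := (hconn F.1 F.2 h1 h2).2 hP0
      simpa [hP] using this.symm
    · constructor <;> intro h <;> [exact absurd (hT h) hF; exact absurd (hS h) hF]
  · right
    ext F
    by_cases hF : F ∈ Faces m n
    · obtain ⟨h1, h2⟩ := (mem_faces F).1 hF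
      have hPF : ¬ P F := fun h => hP0 ((hconn F.1 F.2 h1 h2).1 h)
      simp only [hP, not_iff] at hPF
      simp only [Finset.mem_sdiff, hF, true_and]
      tauto
    · simp only [Finset.mem_sdiff, hF, false_and, iff_false]
      exact fun h => hF (hT h)
end helper

theorem square_grid_min_flip_sequence (m n : ℕ) (hm : 1 ≤ m) (hn : 1 ≤ n)
    (μ₁ μ₂ : Crease m n → ℤ) (hmv₁ : IsMV μ₁) (hmv₂ : IsMV μ₂)
    (hval₁ : LocallyValid μ₁) (hval₂ : LocallyValid μ₂)
    (S : Finset (ℕ × ℕ)) (hS : S ⊆ Faces m n) (hconv : Converts μ₁ μ₂ S) :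
    (∀ L : List (ℕ × ℕ), (∀ F ∈ L, F ∈ Faces m n) →
      (flipSeq μ₁ L = μ₂ ↔
        Converts μ₁ μ₂ (L.toFinset.filter (fun F => Odd (L.count F))))) ∧
    IsLeast {len : ℕ | ∃ L : List (ℕ × ℕ), (∀ F ∈ L, F ∈ Faces m n) ∧
        flipSeq μ₁ L = μ₂ ∧ L.length = len}
      (min S.card (m * n - S.card)) := by
  classical
  have parta : ∀ L : List (ℕ × ℕ),
      (flipSeq μ₁ L = μ₂ ↔
        Converts μ₁ μ₂ (L.toFinset.filter (fun F => Odd (L.count F)))) := by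
    intro L
    rw [funext_iff]
    constructor
    · intro h e
      rw [← h e, flipSeq_eval, neg_one_pow_count]
    · intro h e
      rw [flipSeq_eval, neg_one_pow_count, ← h e]
  -- a list realizing a converting set T
  have realize : ∀ T : Finset (ℕ × ℕ), T ⊆ Faces m n → Converts μ₁ μ₂ T →
      T.card ∈ {len : ℕ | ∃ L : List (ℕ × ℕ), (∀ F ∈ L, F ∈ Faces m n) ∧
        flipSeq μ₁ L = μ₂ ∧ L.length = len} := by
    intro T hTsub hTconv
    refine ⟨T.toList, ?_, ?_, Finset.length_toList T⟩
    · intro F hF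
      exact hTsub (Finset.mem_toList.1 hF)
    · rw [parta T.toList]
      have heq : T.toList.toFinset.filter (fun F => Odd (T.toList.count F)) = T := by
        rw [Finset.toList_toFinset]
        apply Finset.filter_true_of_mem
        intro F hF
        rw [beq_inst_eq]
        have h1 : @List.count (ℕ × ℕ)
            (@instBEqOfDecidableEq (ℕ × ℕ) (inferInstance : DecidableEq (ℕ × ℕ)))
            F T.toList = 1 :=
          by rw [← beq_inst_eq]; exact List.count_eq_one_of_mem T.nodup_toList (Finset.mem_toList.2 hF)
        rw [h1]
        exact odd_one
      rw [beq_inst_eq] at heq ⊢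
      rw [heq]
      exact hTconv
  refine ⟨fun L _ => parta L, ?_, ?_⟩
  · -- membership
    rcases le_or_gt S.card (m * n - S.card) with hle | hlt
    · rw [min_eq_left hle]
      exact realize S hS hconv
    · rw [min_eq_right hlt.le]
      have hcard : (Faces m n \ S).card = m * n - S.card := by
        rw [Finset.card_sdiff_of_subset hS, card_faces]
      rw [← hcard]
      exact realize (Faces m n \ S) Finset.sdiff_subset (converts_compl hS hconv)
  · -- lower bound
    rintro len ⟨L, hL, hflip, rfl⟩
    set T := L.toFinset.filter (fun F => Odd (L.count F)) with hT
    have hTconv : Converts μ₁ μ₂ T := (parta L).1 hflip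
    have hTsub : T ⊆ Faces m n := by
      intro F hF
      exact hL F (List.mem_toFinset.1 (Finset.mem_filter.1 hF).1)
    have hTcard : T.card ≤ L.length := by
      calc T.card = ∑ _F ∈ T, 1 := by simp
        _ ≤ ∑ F ∈ T, L.count F := by
            apply Finset.sum_le_sum
            intro F hF
            have : F ∈ L := List.mem_toFinset.1 (Finset.mem_filter.1 hF).1
            exact List.count_pos_iff.2 this
        _ ≤ ∑ F ∈ L.toFinset, L.count F := by
            apply Finset.sum_le_sum_of_subset (Finset.filter_subset _ _)
        _ = L.length := by
            have := List.sum_toFinset_count_eq_length L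
            rw [beq_inst_eq]
            exact this
    have hmin : min S.card (m * n - S.card) ≤ T.card := by
      rcases converts_unique hm hn hmv₁ hS hTsub hconv hTconv with h | h
      · rw [h]; exact min_le_left _ _
      · rw [h, Finset.card_sdiff_of_subset hS, card_faces]; exact min_le_right _ _
    omega
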